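/- arXiv:1109.0244 — 4 statements merged into one kernel-verified Lean document; each statement's English description precedes it below -/
import Mathlib

section
/- Suppose G is a finitely generated infinite group that is not virtually nilpotent and contains an element of infinite order. If there exist c, δ > 0 such that every finite subset A of G with ⟨A⟩ not virtually nilpotent satisfies |A³| ≥ c|A|^{1+δ}, then δ ≤ 1. -/
open Pointwise

def VirtuallyNilpotent (G : Type*) [Group G] : Prop :=
  ∃ H : Subgroup G, H.FiniteIndex ∧ Group.IsNilpotent H

lemma vn_of_mulEquiv {G H : Type*} [Group G] [Group H] (e : G ≃* H)
    (h : VirtuallyNilpotent G) : VirtuallyNilpotent H := by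
  obtain ⟨K, hfi, hnil⟩ := h
  refine ⟨K.map e.toMonoidHom, ?_, ?_⟩
  · refine ⟨?_⟩
    rw [Subgroup.index_map_of_injective K e.injective]
    intro h0
    rcases Nat.mul_eq_zero.mp h0 with h1 | h1
    · exact hfi.index_ne_zero h1
    · have : (⊤ : Subgroup H).index = 0 := by
        have : e.toMonoidHom.range = ⊤ := MonoidHom.range_eq_top_of_surjective _ e.surjective
        rwa [this] at h1
      simpa [Subgroup.index_top] using this
  · exact nilpotent_of_mulEquiv (Subgroup.equivMapOfInjective K e.toMonoidHom e.injective)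

/-- Helfgott type growth forces `δ ≤ 1`. -/
theorem helfgott_exponent_le_one {G : Type*} [Group G] [DecidableEq G] [Infinite G]
    (hfg : Group.FG G) (hnotnil : ¬ VirtuallyNilpotent G)
    (x : G) (hx : ¬ IsOfFinOrder x)
    (c δ : ℝ) (hc : 0 < c) (hδ : 0 < δ)
    (hHelf : ∀ A : Finset G, ¬ VirtuallyNilpotent ↥(Subgroup.closure (A : Set G)) →
      c * (A.card : ℝ) ^ (1 + δ) ≤ ((A ^ 3).card : ℝ)) :
    δ ≤ 1 := by
  by_contra hδ1
  push_neg at hδ1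
  -- generating set
  obtain ⟨S, hS⟩ := hfg.out
  set T : Finset G := insert 1 S with hT
  set T' : Finset G := T * T with hT'
  set K : ℝ := 2 * (T'.card : ℝ) * (T.card : ℝ) with hK
  have hxinj : Function.Injective (fun n : ℕ => x ^ n) :=
    injective_pow_iff_not_isOfFinOrder.mpr hx
  -- key estimate for every n ≥ 1
  have key : ∀ n : ℕ, 1 ≤ n → c * (n : ℝ) ^ (1 + δ) ≤ K * (n : ℝ) ^ 2 := by
    intro n hn
    set P : Finset G := (Finset.range n).image (fun i => x ^ i) with hP
    set A : Finset G := S ∪ P with hA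
    have hSA : S ⊆ A := Finset.subset_union_left
    have hclos : Subgroup.closure (A : Set G) = ⊤ := by
      rw [eq_top_iff, ← hS]
      exact Subgroup.closure_mono (by exact_mod_cast hSA)
    have hAnn : ¬ VirtuallyNilpotent ↥(Subgroup.closure (A : Set G)) := by
      intro hVN
      rw [hclos] at hVN
      exact hnotnil (vn_of_mulEquiv Subgroup.topEquiv hVN)
    have h1 := hHelf A hAnn
    -- card A ≥ n
    have hcardA : (n : ℝ) ≤ (A.card : ℝ) := by
      have : P.card = n := by
        rw [hP, Finset.card_image_of_injective _ hxinj, Finset.card_range]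
      have hle : P.card ≤ A.card := Finset.card_le_card Finset.subset_union_right
      exact_mod_cast this ▸ hle
    -- representation of elements of A
    have repr : ∀ w ∈ A, ∃ i < n, ∃ s ∈ T, w = x ^ i * s := by
      intro w hw
      rcases Finset.mem_union.mp hw with hw | hw
      · exact ⟨0, hn, w, Finset.mem_insert_of_mem hw, by simp⟩
      · obtain ⟨i, hi, rfl⟩ := Finset.mem_image.mp hw
        exact ⟨i, Finset.mem_range.mp hi, 1, Finset.mem_insert_self _ _, by simp⟩
    -- A^3 is covered
    set B : Finset G := ((Finset.range n) ×ˢ T' ×ˢ (Finset.range (2 * n)) ×ˢ T).image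
      (fun p : ℕ × G × ℕ × G => x ^ p.1 * p.2.1 * x ^ p.2.2.1 * p.2.2.2) with hB
    have hA3 : A ^ 3 ⊆ B := by
      intro a ha
      have : A ^ 3 = A * A * A := by rw [pow_succ, pow_two]
      rw [this] at ha
      obtain ⟨y, hy, z, hz, rfl⟩ := Finset.mem_mul.mp ha
      obtain ⟨u, hu, v, hv, rfl⟩ := Finset.mem_mul.mp hy
      obtain ⟨i₁, hi₁, s₁, hs₁, rfl⟩ := repr u hu
      obtain ⟨i₃, hi₃, s₃, hs₃, rfl⟩ := repr z hz
      rw [hB]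
      apply Finset.mem_image.mpr
      rcases Finset.mem_union.mp hv with hv | hv
      · refine ⟨(i₁, s₁ * v, i₃, s₃), ?_, by group⟩
        simp only [Finset.mem_product]
        refine ⟨Finset.mem_range.mpr hi₁, ?_, Finset.mem_range.mpr (by omega), hs₃⟩
        exact Finset.mul_mem_mul hs₁ (Finset.mem_insert_of_mem hv)
      · obtain ⟨i₂, hi₂, rfl⟩ := Finset.mem_image.mp hv
        have hi₂' := Finset.mem_range.mp hi₂
        refine ⟨(i₁, s₁, i₂ + i₃, s₃), ?_, by rw [pow_add]; group⟩
        simp only [Finset.mem_product]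
        refine ⟨Finset.mem_range.mpr hi₁, ?_, Finset.mem_range.mpr (by omega), hs₃⟩
        rw [hT']
        simpa using Finset.mul_mem_mul hs₁ (Finset.mem_insert_self 1 S)
    have hcardB : ((A ^ 3).card : ℝ) ≤ K * (n : ℝ) ^ 2 := by
      have h2 : (A ^ 3).card ≤ n * (T'.card * (2 * n * T.card)) := by
        calc (A ^ 3).card ≤ B.card := Finset.card_le_card hA3
        _ ≤ _ := by
          rw [hB]
          refine (Finset.card_image_le).trans ?_
          simp [Finset.card_product, Finset.card_range]
      calc ((A ^ 3).card : ℝ) ≤ (n : ℝ) * ((T'.card : ℝ) * (2 * n * T.card)) := by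
            exact_mod_cast h2
        _ = K * (n : ℝ) ^ 2 := by rw [hK]; ring
    -- combine
    have hmono : (n : ℝ) ^ (1 + δ) ≤ (A.card : ℝ) ^ (1 + δ) :=
      Real.rpow_le_rpow (by positivity) hcardA (by linarith)
    calc c * (n : ℝ) ^ (1 + δ) ≤ c * (A.card : ℝ) ^ (1 + δ) := by
          exact mul_le_mul_of_nonneg_left hmono hc.le
      _ ≤ ((A ^ 3).card : ℝ) := h1
      _ ≤ K * (n : ℝ) ^ 2 := hcardB
  -- derive contradiction: n^(δ-1) is bounded
  have hKpos : 0 < K := by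
    have h1 := key 1 le_rfl
    simp [Real.one_rpow] at h1
    linarith
  have htend : Filter.Tendsto (fun n : ℕ => (n : ℝ) ^ (δ - 1)) Filter.atTop Filter.atTop :=
    (tendsto_rpow_atTop (by linarith)).comp tendsto_natCast_atTop_atTop
  obtain ⟨n, hn1, hnbig⟩ :=
    ((htend.eventually_gt_atTop (K / c)).and (Filter.eventually_ge_atTop 1)).exists
  have hnpos : (0 : ℝ) < n := by exact_mod_cast hnbig
  have hsplit : (n : ℝ) ^ (1 + δ) = (n : ℝ) ^ 2 * (n : ℝ) ^ (δ - 1) := by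
    rw [← Real.rpow_natCast (n : ℝ) 2, ← Real.rpow_add hnpos]
    congr 1
    push_cast
    ring
  have hkey := key n hnbig
  rw [hsplit] at hkey
  have hn2 : (0 : ℝ) < (n : ℝ) ^ 2 := by positivity
  have h3 : c * (n : ℝ) ^ (δ - 1) ≤ K := by nlinarith
  have h4 : (n : ℝ) ^ (δ - 1) ≤ K / c := by
    rw [le_div_iff₀ hc]
    linarith [mul_comm c ((n : ℝ) ^ (δ - 1))]
  linarith
end

section
/- If G is a group possessing an element z of infinite order whose centralizer C(z) in G contains a finitely generated subgroup H that is not virtually nilpotent, then for every c, δ > 0 there exists a finite subset A of G with ⟨A⟩ not virtually nilpotent and |A³| < c|A|^{1+δ}; that is, G does not have Helfgott type growth. -/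
open Pointwise

private lemma tri_prod {G : Type*} [Group G] {z s t u : G}
    (ht : Commute z t) (hu : Commute z u) (a b c : ℕ) :
    (s * z ^ a) * (t * z ^ b) * (u * z ^ c) = (s * t * u) * z ^ (a + b + c) := by
  calc (s * z ^ a) * (t * z ^ b) * (u * z ^ c)
      = s * (z ^ a * t) * z ^ b * (u * z ^ c) := by group
    _ = s * (t * z ^ a) * z ^ b * (u * z ^ c) := by rw [(ht.pow_left a).eq]
    _ = (s * t) * ((z ^ a * z ^ b) * u) * z ^ c := by group
    _ = (s * t) * (z ^ (a + b) * u) * z ^ c := by rw [pow_add]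
    _ = (s * t) * (u * z ^ (a + b)) * z ^ c := by rw [(hu.pow_left (a + b)).eq]
    _ = (s * t * u) * z ^ (a + b + c) := by rw [pow_add z (a + b) c, pow_add z a b]; group

/-- a big centraliser of an infinite order element kills Helfgott growth. -/
theorem no_helfgott_of_centralizer {G : Type*} [Group G] [DecidableEq G]
    (z : G) (hz : ¬ IsOfFinOrder z)
    (H : Subgroup G) (hHle : H ≤ Subgroup.centralizer {z}) (hzH : z ∈ H)
    (hfg : H.FG) (hnil : ¬ VirtuallyNilpotent ↥H)
    (c δ : ℝ) (hc : 0 < c) (hδ : 0 < δ) :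
    ∃ A : Finset G, ¬ VirtuallyNilpotent ↥(Subgroup.closure (A : Set G)) ∧
      ((A ^ 3).card : ℝ) < c * (A.card : ℝ) ^ (1 + δ) := by
  obtain ⟨S, hS⟩ := hfg
  have hSH : ∀ g ∈ S, g ∈ H := fun g hg => hS ▸ Subgroup.subset_closure hg
  have hcommH : ∀ g ∈ H, Commute z g := fun g hg =>
    Subgroup.mem_centralizer_iff.mp (hHle hg) z rfl
  set S' : Finset G := insert (1 : G) S with hS'
  have hcommS' : ∀ g ∈ S', Commute z g := by
    intro g hg
    rcases Finset.mem_insert.mp hg with h | h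
    · simp [h]
    · exact hcommH g (hSH g h)
  set T : Finset G := S' * S' * S' with hT
  set K : ℝ := (T.card : ℝ) with hK
  have hK0 : 0 ≤ K := by positivity
  -- choose N large
  have htend : Filter.Tendsto (fun n : ℕ => (n : ℝ) ^ δ) Filter.atTop Filter.atTop :=
    (tendsto_rpow_atTop hδ).comp tendsto_natCast_atTop_atTop
  obtain ⟨N, hNδ, hN1⟩ :=
    ((htend.eventually_gt_atTop (4 * K / c)).and (Filter.eventually_ge_atTop 1)).exists
  have hNpos : (0 : ℝ) < N := by exact_mod_cast hN1
  -- the set A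
  have hinj : Function.Injective fun n : ℕ => z ^ n :=
    injective_pow_iff_not_isOfFinOrder.mpr hz
  set zImg : Finset G := (Finset.range N).image (fun i => z ^ (i + 1)) with hzImg
  set A : Finset G := zImg ∪ S with hA
  refine ⟨A, ?_, ?_⟩
  · -- closure A = H
    have hclo : Subgroup.closure (A : Set G) = H := by
      apply le_antisymm
      · rw [Subgroup.closure_le]
        intro x hx
        rcases Finset.mem_union.mp hx with h | h
        · obtain ⟨i, _, rfl⟩ := Finset.mem_image.mp h
          exact H.pow_mem hzH (i + 1)
        · exact hSH x h
      · conv_lhs => rw [← hS]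
        apply Subgroup.closure_mono
        intro x hx
        exact Finset.mem_coe.mpr (Finset.mem_union_right _ (Finset.mem_coe.mp hx))
    rw [hclo]; exact hnil
  · -- decomposition of each element of A
    have hdec : ∀ a ∈ A, ∃ s ∈ S', ∃ i ≤ N, a = s * z ^ i := by
      intro a ha
      rcases Finset.mem_union.mp ha with h | h
      · obtain ⟨i, hi, rfl⟩ := Finset.mem_image.mp h
        exact ⟨1, Finset.mem_insert_self _ _, i + 1, Finset.mem_range.mp hi, by simp⟩
      · exact ⟨a, Finset.mem_insert_of_mem h, 0, Nat.zero_le _, by simp⟩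
    -- A^3 ⊆ T * Z
    set Z : Finset G := (Finset.range (3 * N + 1)).image (fun i => z ^ i) with hZ
    have hsub : A ^ 3 ⊆ T * Z := by
      intro x hx
      rw [pow_succ, pow_succ, pow_one] at hx
      obtain ⟨y, hy, c3, hc3, rfl⟩ := Finset.mem_mul.mp hx
      obtain ⟨c1, hc1, c2, hc2, rfl⟩ := Finset.mem_mul.mp hy
      obtain ⟨s1, hs1, i1, hi1, rfl⟩ := hdec c1 hc1
      obtain ⟨s2, hs2, i2, hi2, rfl⟩ := hdec c2 hc2
      obtain ⟨s3, hs3, i3, hi3, rfl⟩ := hdec c3 hc3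
      rw [tri_prod (hcommS' s2 hs2) (hcommS' s3 hs3)]
      apply Finset.mul_mem_mul
      · exact Finset.mul_mem_mul (Finset.mul_mem_mul hs1 hs2) hs3
      · exact Finset.mem_image.mpr ⟨i1 + i2 + i3, Finset.mem_range.mpr (by omega), rfl⟩
    -- cardinality bounds
    have hcardA : N ≤ A.card := by
      have h1 : zImg.card = N := by
        rw [hzImg, Finset.card_image_of_injective _
          (fun i j hij => by simpa using hinj hij), Finset.card_range]
      calc N = zImg.card := h1.symm
        _ ≤ A.card := Finset.card_le_card Finset.subset_union_left
    have hcard3 : ((A ^ 3).card : ℝ) ≤ K * (3 * N + 1) := by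
      calc ((A ^ 3).card : ℝ) ≤ ((T * Z).card : ℝ) := by
            exact_mod_cast Finset.card_le_card hsub
        _ ≤ (T.card : ℝ) * (Z.card : ℝ) := by exact_mod_cast Finset.card_mul_le
        _ ≤ K * (3 * N + 1) := by
            apply mul_le_mul_of_nonneg_left _ hK0
            calc (Z.card : ℝ) ≤ ((Finset.range (3 * N + 1)).card : ℝ) := by
                  exact_mod_cast Finset.card_image_le
              _ = (3 * N + 1 : ℕ) := by rw [Finset.card_range]
              _ = 3 * (N : ℝ) + 1 := by push_cast; ring
    -- finish
    have hstep : K * (3 * (N : ℝ) + 1) < c * (N : ℝ) ^ (1 + δ) := by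
      have h4 : 4 * K < c * (N : ℝ) ^ δ := by
        rw [div_lt_iff₀ hc] at hNδ
        linarith [hNδ]
      have hrpow : (N : ℝ) ^ (1 + δ) = (N : ℝ) * (N : ℝ) ^ δ := by
        rw [Real.rpow_add hNpos, Real.rpow_one]
      have hN1' : (1 : ℝ) ≤ N := by exact_mod_cast hN1
      have h1 : K * (3 * (N : ℝ) + 1) ≤ 4 * K * N := by nlinarith
      have h2 : 4 * K * N < c * (N : ℝ) ^ δ * N := by
        exact mul_lt_mul_of_pos_right h4 hNpos
      rw [hrpow]; nlinarith
    have hmono : c * (N : ℝ) ^ (1 + δ) ≤ c * (A.card : ℝ) ^ (1 + δ) := by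
      apply mul_le_mul_of_nonneg_left _ hc.le
      apply Real.rpow_le_rpow hNpos.le (by exact_mod_cast hcardA) (by linarith)
    calc ((A ^ 3).card : ℝ) ≤ K * (3 * (N : ℝ) + 1) := hcard3
      _ < c * (N : ℝ) ^ (1 + δ) := hstep
      _ ≤ c * (A.card : ℝ) ^ (1 + δ) := hmono
end

section
/- Let N be a finite group and G = F₂ × N where F₂ = ⟨x, y⟩ is the free group of rank 2. Then the set A = {(x, n) : n ∈ N} ∪ {(y, n) : n ∈ N} satisfies |A| = 2|N|, the subgroup generated by A contains a nonabelian free subgroup (hence is not virtually nilpotent), and |A³| = 8|N|. -/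
open Pointwise

lemma reduce_eq_self_of_all_true {α} [DecidableEq α] :
    ∀ (L : List (α × Bool)), (∀ p ∈ L, p.2 = true) → FreeGroup.reduce L = L := by
  intro L h
  induction L with
  | nil => rfl
  | cons x xs ih =>
    rw [FreeGroup.reduce.cons, ih (fun p hp => h p (List.mem_cons_of_mem _ hp))]
    cases xs with
    | nil => rfl
    | cons y ys =>
      have hx : x.2 = true := h x (by simp)
      have hy : y.2 = true := h y (by simp)
      simp [hx, hy]

lemma of_pow_eq_mk {α} [DecidableEq α] (a : α) (n : ℕ) :
    (FreeGroup.of a) ^ n = FreeGroup.mk (List.replicate n (a, true)) := by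
  rw [← FreeGroup.toWord_of_pow, FreeGroup.mk_toWord]

lemma pow_mul_pow_ne {m k : ℕ} (hm : m ≠ 0) (hk : k ≠ 0) :
    (FreeGroup.of false) ^ m * (FreeGroup.of true) ^ k ≠
      (FreeGroup.of true) ^ k * (FreeGroup.of false) ^ m := by
  intro h
  rw [of_pow_eq_mk, of_pow_eq_mk, FreeGroup.mul_mk, FreeGroup.mul_mk] at h
  have h2 := congrArg FreeGroup.toWord h
  rw [FreeGroup.toWord_mk, FreeGroup.toWord_mk,
    reduce_eq_self_of_all_true _ (by intro p hp; rcases List.mem_append.1 hp with h' | h' <;>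
      simp [List.eq_of_mem_replicate h']),
    reduce_eq_self_of_all_true _ (by intro p hp; rcases List.mem_append.1 hp with h' | h' <;>
      simp [List.eq_of_mem_replicate h'])] at h2
  obtain ⟨m, rfl⟩ := Nat.exists_eq_succ_of_ne_zero hm
  obtain ⟨k, rfl⟩ := Nat.exists_eq_succ_of_ne_zero hk
  rw [List.replicate_succ, List.replicate_succ (a := ((true, true) : Bool × Bool)),
    List.cons_append, List.cons_append] at h2
  exact absurd (congrArg (·.headI.1) h2) (by simp)

lemma of_three_eq_mk {α} [DecidableEq α] (a b c : α) :
    FreeGroup.of a * FreeGroup.of b * FreeGroup.of c =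
      FreeGroup.mk [(a, true), (b, true), (c, true)] := by
  have : ∀ x : α, FreeGroup.of x = FreeGroup.mk [(x, true)] := fun x => rfl
  rw [this, this, this, FreeGroup.mul_mk, FreeGroup.mul_mk]
  rfl

lemma of_three_injective {α} [DecidableEq α] {a b c a' b' c' : α}
    (h : FreeGroup.of a * FreeGroup.of b * FreeGroup.of c =
      FreeGroup.of a' * FreeGroup.of b' * FreeGroup.of c') :
    a = a' ∧ b = b' ∧ c = c' := by
  rw [of_three_eq_mk, of_three_eq_mk] at h
  have h2 := congrArg FreeGroup.toWord h
  rw [FreeGroup.toWord_mk, FreeGroup.toWord_mk,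
    reduce_eq_self_of_all_true _ (by simp), reduce_eq_self_of_all_true _ (by simp)] at h2
  simp_all

lemma perm3_card : Nat.card (Equiv.Perm (Fin 3)) = 6 := by
  rw [Nat.card_eq_fintype_card, Fintype.card_perm]
  rfl

lemma center_perm3 : Subgroup.center (Equiv.Perm (Fin 3)) = ⊥ := by
  ext g
  rw [Subgroup.mem_center_iff, Subgroup.mem_bot]
  revert g; decide

lemma not_nilpotent_of_center_bot {G : Type*} [Group G] [Nontrivial G]
    (h : Subgroup.center G = ⊥) : ¬ Group.IsNilpotent G := by
  intro hn
  have hall : ∀ n, Subgroup.upperCentralSeries G n = ⊥ := by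
    intro n
    induction n with
    | zero => exact Subgroup.upperCentralSeries_zero G
    | succ n ih =>
      apply le_antisymm _ bot_le
      intro g hg
      rw [mem_upperCentralSeries_succ_iff] at hg
      have hc : g ∈ Subgroup.center G := by
        rw [Subgroup.mem_center_iff]
        intro y
        have hgy := hg y
        rw [ih, Subgroup.mem_bot] at hgy
        have h1 : g * y * g⁻¹ * y⁻¹ * y = 1 * y := by rw [← hgy, commutatorElement_def]
        have h2 : g * y * g⁻¹ = y := by simpa [mul_assoc] using h1
        calc y * g = (g * y * g⁻¹) * g := by rw [h2]
        _ = g * y := by group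
      rwa [h] at hc
  obtain ⟨n, hn'⟩ := hn.nilpotent'
  rw [hall n] at hn'
  obtain ⟨x, hx⟩ := exists_ne (1 : G)
  exact hx (by simpa using (hn' ▸ Subgroup.mem_top x : x ∈ (⊥ : Subgroup G)))

lemma not_nilpotent_perm3 : ¬ Group.IsNilpotent (Equiv.Perm (Fin 3)) := by
  have : Nontrivial (Equiv.Perm (Fin 3)) := ⟨⟨Equiv.swap 0 1, 1, by decide⟩⟩
  exact not_nilpotent_of_center_bot center_perm3

open Subgroup in
lemma free_fi_not_nilpotent (K : Subgroup (FreeGroup Bool)) (hfi : K.index ≠ 0)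
    (hnil : Group.IsNilpotent K) : False := by
  obtain ⟨m, hm, -, hxm⟩ := K.exists_pow_mem_of_index_ne_zero hfi (FreeGroup.of false)
  obtain ⟨k, hk, -, hyk⟩ := K.exists_pow_mem_of_index_ne_zero hfi (FreeGroup.of true)
  haveI : IsFreeGroup K := inferInstance
  by_cases hT : Subsingleton (IsFreeGroup.Generators K)
  · -- K is abelian
    have comm : ∀ u v : FreeGroup (IsFreeGroup.Generators K), u * v = v * u := by
      intro u v
      have hu : u ∈ Subgroup.closure (Set.range (FreeGroup.of :
          IsFreeGroup.Generators K → _)) := by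
        rw [FreeGroup.closure_range_of]; trivial
      have hv : v ∈ Subgroup.closure (Set.range (FreeGroup.of :
          IsFreeGroup.Generators K → _)) := by
        rw [FreeGroup.closure_range_of]; trivial
      refine Subgroup.closure_induction₂ (p := fun x y _ _ => x * y = y * x)
        ?_ ?_ ?_ ?_ ?_ ?_ ?_ hu hv
      · rintro x y ⟨a, rfl⟩ ⟨b, rfl⟩
        obtain rfl : a = b := Subsingleton.elim a b
        rfl
      · intro x _; rw [one_mul, mul_one]
      · intro x _; rw [one_mul, mul_one]
      · intro x y z _ _ _ h1 h2
        calc x * y * z = x * (z * y) := by rw [mul_assoc, h2]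
        _ = z * (x * y) := by rw [← mul_assoc, h1, mul_assoc]
      · intro y z x _ _ _ h1 h2
        calc x * (y * z) = y * (x * z) := by rw [← mul_assoc, h1, mul_assoc]
        _ = y * z * x := by rw [mul_assoc, h2, ← mul_assoc]
      · intro x y _ _ h1
        exact (Commute.inv_left h1).eq
      · intro x y _ _ h1
        exact (Commute.inv_right h1).eq
    have commK : ∀ u v : K, u * v = v * u := by
      intro u v
      have e := IsFreeGroup.toFreeGroup (G := K)
      apply e.injective
      rw [map_mul, map_mul, comm]
    have hcomm := commK ⟨_, hxm⟩ ⟨_, hyk⟩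
    rw [Subtype.ext_iff] at hcomm
    exact pow_mul_pow_ne (by omega) (by omega) hcomm
  · rw [not_subsingleton_iff_nontrivial] at hT
    obtain ⟨s, t, hst⟩ := hT
    classical
    let ρ : K →* Equiv.Perm (Fin 3) := IsFreeGroup.lift
      (fun u => if u = s then Equiv.swap 0 1 else if u = t then Equiv.swap 1 2 else 1)
    have hρs : ρ (IsFreeGroup.of s) = Equiv.swap 0 1 := by
      simp [ρ, IsFreeGroup.lift_of]
    have hρt : ρ (IsFreeGroup.of t) = Equiv.swap 1 2 := by
      simp [ρ, IsFreeGroup.lift_of, hst.symm]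
    have h1 : Equiv.swap (0 : Fin 3) 1 ∈ ρ.range := ⟨_, hρs⟩
    have h2 : (Equiv.swap (0 : Fin 3) 1 * Equiv.swap 1 2) ∈ ρ.range :=
      ⟨IsFreeGroup.of s * IsFreeGroup.of t, by rw [map_mul, hρs, hρt]⟩
    haveI : Fact (Nat.Prime 2) := ⟨by norm_num⟩
    haveI : Fact (Nat.Prime 3) := ⟨by norm_num⟩
    have o1 : orderOf (Equiv.swap (0 : Fin 3) 1) = 2 :=
      orderOf_eq_prime (by decide) (by decide)
    have o2 : orderOf (Equiv.swap (0 : Fin 3) 1 * Equiv.swap 1 2) = 3 :=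
      orderOf_eq_prime (by decide) (by decide)
    have d2 : 2 ∣ Nat.card ρ.range := by
      have := ρ.range.orderOf_dvd_natCard h1; rwa [o1] at this
    have d3 : 3 ∣ Nat.card ρ.range := by
      have := ρ.range.orderOf_dvd_natCard h2; rwa [o2] at this
    have d6 : (6 : ℕ) ∣ Nat.card ρ.range :=
      Nat.Coprime.mul_dvd_of_dvd_of_dvd (by norm_num) d2 d3
    have hle : Nat.card ρ.range ∣ 6 := perm3_card ▸ Subgroup.card_subgroup_dvd_card ρ.range
    have hcard : Nat.card ρ.range = 6 := Nat.dvd_antisymm hle d6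
    have htop : ρ.range = ⊤ := Subgroup.eq_top_of_card_eq _ (by rw [hcard, perm3_card])
    haveI := hnil
    have hnR : Group.IsNilpotent ρ.range :=
      nilpotent_of_surjective ρ.rangeRestrict ρ.rangeRestrict_surjective
    rw [htop] at hnR
    exact not_nilpotent_perm3 (Group.isNilpotent_top.mp hnR)

/-- the example `A = {(x,n),(y,n) : n ∈ N}` in `F₂ × N`. -/
theorem free_times_finite_example {N : Type*} [Group N] [Fintype N] [DecidableEq N]
    [DecidableEq (FreeGroup Bool × N)]
    (A : Finset (FreeGroup Bool × N))
    (hA : A = ((Finset.univ : Finset Bool) ×ˢ (Finset.univ : Finset N)).image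
      fun p => (FreeGroup.of p.1, p.2)) :
    A.card = 2 * Fintype.card N ∧
      (∃ f : FreeGroup Bool →* FreeGroup Bool × N, Function.Injective f ∧
        f.range ≤ Subgroup.closure (A : Set (FreeGroup Bool × N))) ∧
      ¬ VirtuallyNilpotent ↥(Subgroup.closure (A : Set (FreeGroup Bool × N))) ∧
      (A ^ 3).card = 8 * Fintype.card N := by
  have hmemA : ∀ (b : Bool) (n : N), (FreeGroup.of b, n) ∈ A := by
    intro b n
    rw [hA]
    exact Finset.mem_image.mpr ⟨(b, n), by simp, rfl⟩
  set C := Subgroup.closure (A : Set (FreeGroup Bool × N)) with hC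
  have hCA : ∀ (b : Bool) (n : N), (FreeGroup.of b, n) ∈ C :=
    fun b n => Subgroup.subset_closure (Finset.mem_coe.mpr (hmemA b n))
  have hC1 : ∀ n : N, ((1 : FreeGroup Bool), n) ∈ C := by
    intro n
    have := mul_mem (hCA true n) (inv_mem (hCA true 1))
    simpa using this
  have hCW : ∀ w : FreeGroup Bool, (w, (1 : N)) ∈ C := by
    intro w
    induction w using FreeGroup.induction_on with
    | C1 => exact one_mem C
    | of a => exact hCA a 1
    | inv_of a ih => simpa using inv_mem ih
    | mul u v hu hv => simpa using mul_mem hu hv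
  refine ⟨?_, ?_, ?_, ?_⟩
  · -- card A
    rw [hA, Finset.card_image_of_injective]
    · simp [Finset.card_product]
    · rintro ⟨a, n⟩ ⟨b, m⟩ h
      obtain ⟨h1, h2⟩ := Prod.ext_iff.mp h
      exact Prod.ext (FreeGroup.of_injective h1) h2
  · -- free subgroup
    refine ⟨MonoidHom.inl _ _, fun a b h => (Prod.ext_iff.mp h).1, ?_⟩
    rintro z ⟨w, rfl⟩
    exact hCW w
  · -- not virtually nilpotent
    rintro ⟨H, hfi, hnil⟩
    set φ : FreeGroup Bool →* C :=
      (MonoidHom.inl (FreeGroup Bool) N).codRestrict C (fun w => hCW w) with hφ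
    have hφinj : Function.Injective φ := by
      intro a b h
      have h' : ((a, (1 : N)) : FreeGroup Bool × N) = (b, 1) := congrArg Subtype.val h
      exact (Prod.ext_iff.mp h').1
    set K := H.comap φ with hK
    have hKind : K.index ≠ 0 := by
      rw [hK, Subgroup.index_comap]
      intro h0
      exact hfi.index_ne_zero (Subgroup.index_eq_zero_of_relIndex_eq_zero h0)
    have hψ : ∃ ψ : K →* H, Function.Injective ψ := by
      refine ⟨MonoidHom.codRestrict (φ.comp K.subtype) H
        (fun k => Subgroup.mem_comap.mp k.2), ?_⟩
      intro a b h
      exact Subtype.ext (hφinj (congrArg Subtype.val h))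
    obtain ⟨ψ, hψinj⟩ := hψ
    haveI := hnil
    have hKnil : Group.IsNilpotent K :=
      (Group.isNilpotent_congr (MonoidHom.ofInjective hψinj)).mpr inferInstance
    exact free_fi_not_nilpotent K hKind hKnil
  · -- card A^3
    have h3 : A ^ 3 = A * A * A := by rw [pow_succ, pow_succ, pow_one]
    set g : (Bool × Bool × Bool) × N → FreeGroup Bool × N :=
      fun p => (FreeGroup.of p.1.1 * FreeGroup.of p.1.2.1 * FreeGroup.of p.1.2.2, p.2) with hg
    have himg : A * A * A = Finset.image g Finset.univ := by
      apply Finset.Subset.antisymm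
      · intro z hz
        obtain ⟨u, hu, w, hw, rfl⟩ := Finset.mem_mul.mp hz
        obtain ⟨u1, hu1, u2, hu2, rfl⟩ := Finset.mem_mul.mp hu
        rw [hA] at hu1 hu2 hw
        obtain ⟨⟨a, n1⟩, -, rfl⟩ := Finset.mem_image.mp hu1
        obtain ⟨⟨b, n2⟩, -, rfl⟩ := Finset.mem_image.mp hu2
        obtain ⟨⟨c, n3⟩, -, rfl⟩ := Finset.mem_image.mp hw
        exact Finset.mem_image.mpr ⟨((a, b, c), n1 * n2 * n3), Finset.mem_univ _, rfl⟩
      · intro z hz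
        obtain ⟨⟨⟨a, b, c⟩, n⟩, -, rfl⟩ := Finset.mem_image.mp hz
        refine Finset.mem_mul.mpr ⟨_, Finset.mem_mul.mpr
          ⟨(FreeGroup.of a, n), hmemA a n, (FreeGroup.of b, 1), hmemA b 1, rfl⟩,
          (FreeGroup.of c, 1), hmemA c 1, ?_⟩
        show (FreeGroup.of a * FreeGroup.of b * FreeGroup.of c, n * 1 * 1) = _
        rw [mul_one, mul_one]
    have hginj : Function.Injective g := by
      rintro ⟨⟨a, b, c⟩, n⟩ ⟨⟨a', b', c'⟩, n'⟩ h
      obtain ⟨h1, h2⟩ := Prod.ext_iff.mp h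
      obtain ⟨rfl, rfl, rfl⟩ := of_three_injective h1
      simp only [hg] at h2
      rw [h2]
    rw [h3, himg, Finset.card_image_of_injective _ hginj]
    simp
end

section
/- Let N be a finite normal subgroup of a group G, and suppose G has Helfgott type growth with constants c, δ > 0 (with exceptions the virtually nilpotent generated subgroups). Then G/N has Helfgott type growth with constants c·|N|^δ and δ. -/
open Pointwise

lemma virtuallyNilpotent_of_surjective {G K : Type*} [Group G] [Group K]
    (f : G →* K) (hf : Function.Surjective f) (h : VirtuallyNilpotent G) :
    VirtuallyNilpotent K := by
  obtain ⟨H, hfi, hnil⟩ := h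
  refine ⟨H.map f, ⟨?_⟩, ?_⟩
  · have hdvd := Subgroup.index_map_dvd (H := H) hf
    intro h0
    rw [h0, zero_dvd_iff] at hdvd
    exact hfi.index_ne_zero hdvd
  · exact nilpotent_of_surjective (f.subgroupMap H) (f.subgroupMap_surjective H)

/-- Helfgott growth passes from `G` to `G/N` for finite normal `N`. -/
theorem helfgott_to_quotient {G : Type*} [Group G] [DecidableEq G]
    (N : Subgroup G) [N.Normal] [Finite N] [DecidableEq (G ⧸ N)]
    (c δ : ℝ) (hc : 0 < c) (hδ : 0 < δ)
    (hHelf : ∀ A : Finset G, ¬ VirtuallyNilpotent ↥(Subgroup.closure (A : Set G)) →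
      c * (A.card : ℝ) ^ (1 + δ) ≤ ((A ^ 3).card : ℝ)) :
    ∀ S : Finset (G ⧸ N), ¬ VirtuallyNilpotent ↥(Subgroup.closure (S : Set (G ⧸ N))) →
      (c * (Nat.card N : ℝ) ^ δ) * (S.card : ℝ) ^ (1 + δ) ≤ ((S ^ 3).card : ℝ) := by
  intro S hS
  -- the preimage of a finite set in the quotient is finite, with card = |N| * card
  have hfin : ∀ T : Finset (G ⧸ N),
      (QuotientGroup.mk ⁻¹' (T : Set (G ⧸ N)) : Set G).Finite := by
    intro T
    have : Finite ↥(QuotientGroup.mk ⁻¹' (T : Set (G ⧸ N)) : Set G) :=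
      Finite.of_equiv _ (QuotientGroup.preimageMkEquivSubgroupProdSet N (T : Set (G ⧸ N))).symm
    exact Set.toFinite _
  have hcard : ∀ T : Finset (G ⧸ N),
      Nat.card ↥(QuotientGroup.mk ⁻¹' (T : Set (G ⧸ N)) : Set G) = Nat.card N * T.card := by
    intro T
    rw [Nat.card_congr (QuotientGroup.preimageMkEquivSubgroupProdSet N (T : Set (G ⧸ N))),
      Nat.card_prod]
    congr 1
    rw [Nat.card_coe_set_eq, Set.ncard_coe_finset]
  set B : Finset G := (hfin S).toFinset with hB
  have hBcoe : (B : Set G) = QuotientGroup.mk ⁻¹' (S : Set (G ⧸ N)) := (hfin S).coe_toFinset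
  have hBcard : B.card = Nat.card N * S.card := by
    rw [← hcard S, Nat.card_eq_card_finite_toFinset (hfin S)]
  -- closure of B is not virtually nilpotent
  have hBnotVN : ¬ VirtuallyNilpotent ↥(Subgroup.closure (B : Set G)) := by
    intro h
    apply hS
    have hmap : (Subgroup.closure (B : Set G)).map (QuotientGroup.mk' N)
        = Subgroup.closure (S : Set (G ⧸ N)) := by
      rw [MonoidHom.map_closure]
      congr 1
      rw [hBcoe]
      exact Set.image_preimage_eq _ (QuotientGroup.mk'_surjective N)
    have := virtuallyNilpotent_of_surjective
      ((QuotientGroup.mk' N).subgroupMap (Subgroup.closure (B : Set G)))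
      ((QuotientGroup.mk' N).subgroupMap_surjective _) h
    rwa [hmap] at this
  -- B^3 lies in the preimage of S^3
  have hB3sub : B ^ 3 ⊆ (hfin (S ^ 3)).toFinset := by
    intro x hx
    rw [Set.Finite.mem_toFinset]
    rw [pow_succ, pow_two] at hx
    obtain ⟨y, hy, b3, hb3, rfl⟩ := Finset.mem_mul.mp hx
    obtain ⟨b1, hb1, b2, hb2, rfl⟩ := Finset.mem_mul.mp hy
    have m1 : QuotientGroup.mk b1 ∈ S := by
      have := (hfin S).mem_toFinset.mp hb1; exact this
    have m2 : QuotientGroup.mk b2 ∈ S := by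
      have := (hfin S).mem_toFinset.mp hb2; exact this
    have m3 : QuotientGroup.mk b3 ∈ S := by
      have := (hfin S).mem_toFinset.mp hb3; exact this
    have : QuotientGroup.mk (b1 * b2 * b3) =
        (QuotientGroup.mk b1 : G ⧸ N) * QuotientGroup.mk b2 * QuotientGroup.mk b3 := rfl
    show QuotientGroup.mk (b1 * b2 * b3) ∈ ((S ^ 3 : Finset (G ⧸ N)) : Set (G ⧸ N))
    rw [this]
    have : (QuotientGroup.mk b1 : G ⧸ N) * QuotientGroup.mk b2 * QuotientGroup.mk b3
        ∈ S ^ 3 := by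
      rw [pow_succ, pow_two]
      exact Finset.mul_mem_mul (Finset.mul_mem_mul m1 m2) m3
    exact this
  have hB3card : (B ^ 3).card ≤ Nat.card N * (S ^ 3).card := by
    calc (B ^ 3).card ≤ ((hfin (S ^ 3)).toFinset).card := Finset.card_le_card hB3sub
      _ = Nat.card N * (S ^ 3).card := by
          rw [← hcard (S ^ 3), Nat.card_eq_card_finite_toFinset (hfin (S ^ 3))]
  -- apply Helfgott growth to B
  have hkey := hHelf B hBnotVN
  set n : ℝ := (Nat.card N : ℝ) with hn
  have hnpos : (0 : ℝ) < n := by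
    have : 0 < Nat.card N := Nat.card_pos
    rw [hn]; exact_mod_cast this
  have hcast : ((B.card : ℕ) : ℝ) = n * (S.card : ℝ) := by
    rw [hBcard]; push_cast; ring
  rw [hcast] at hkey
  have hs : (0 : ℝ) ≤ (S.card : ℝ) := Nat.cast_nonneg _
  have hrw : (n * (S.card : ℝ)) ^ (1 + δ) = (n * n ^ δ) * (S.card : ℝ) ^ (1 + δ) := by
    rw [Real.mul_rpow (le_of_lt hnpos) hs, Real.rpow_add hnpos, Real.rpow_one]
  rw [hrw] at hkey
  have hub : ((B ^ 3).card : ℝ) ≤ n * ((S ^ 3).card : ℝ) := by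
    have := hB3card
    calc ((B ^ 3).card : ℝ) ≤ ((Nat.card N * (S ^ 3).card : ℕ) : ℝ) := by exact_mod_cast this
      _ = n * ((S ^ 3).card : ℝ) := by push_cast; ring
  have hfinal : c * (n * n ^ δ * (S.card : ℝ) ^ (1 + δ)) ≤ n * ((S ^ 3).card : ℝ) :=
    le_trans hkey hub
  have : (c * n ^ δ * (S.card : ℝ) ^ (1 + δ)) * n ≤ ((S ^ 3).card : ℝ) * n := by nlinarith
  exact le_of_mul_le_mul_right this hnpos
end
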